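/- (Theorem 3.1, equation (3.9): macroscopic profile) Set α = tanh(βλ/2) and define M : [0, 1] \ {1/2} → ℝ by M(r) = −2αr for r ∈ [0, 1/2) and M(r) = 2α(1 − r) for r ∈ (1/2, 1]. Then for every r ∈ [0, 1] with r ≠ 1/2 and every ε > 0 there exists L > 4 such that for every ℓ > L and every stationary solution (j, m) on [0, ℓ], one has |m(rℓ) − M(r)| < ε. -/

import Mathlib

open Real Set

/-- The force profile `g(x) = ∫_{x-1}^x 1_{y ≤ ℓ/2} dy − ∫_x^{x+1} 1_{y ≤ ℓ/2} dy`. -/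
noncomputable def gfun (ℓ : ℝ) (x : ℝ) : ℝ :=
  (∫ y in (x - 1)..x, if y ≤ ℓ / 2 then (1 : ℝ) else 0) -
  (∫ y in x..(x + 1), if y ≤ ℓ / 2 then (1 : ℝ) else 0)

/-- An IVP solution with parameter `j`: a differentiable `m` on `[0, ℓ]` with `m 0 = 0`
and `m'(x) = -2j + βλ(1 - m(x)²) g(x)` on `[0, ℓ]`. -/
def IsIVPSolution (β lam ℓ j : ℝ) (m : ℝ → ℝ) : Prop :=
  m 0 = 0 ∧ ∀ x ∈ Icc (0 : ℝ) ℓ,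
    HasDerivAt m (-2 * j + β * lam * (1 - m x ^ 2) * gfun ℓ x) x

/-- A stationary solution: an IVP solution which also satisfies `m ℓ = 0`. -/
def IsStationarySolution (β lam ℓ j : ℝ) (m : ℝ → ℝ) : Prop :=
  IsIVPSolution β lam ℓ j m ∧ m ℓ = 0

/-- The macroscopic profile `M` of (3.9), with `α = tanh(βλ/2)`. -/
noncomputable def Mprof (β lam : ℝ) (r : ℝ) : ℝ :=
  if r < 1 / 2 then -2 * Real.tanh (β * lam / 2) * r
  else 2 * Real.tanh (β * lam / 2) * (1 - r)

open MeasureTheory Topology Filter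

lemma ind_int (c u v : ℝ) (h : u ≤ v) :
    (∫ y in u..v, if y ≤ c then (1:ℝ) else 0) = min v c - min u c := by
  rcases le_total v c with hvc | hcv
  · rw [intervalIntegral.integral_congr (g := fun _ => (1:ℝ))]
    · simp [min_eq_left hvc, min_eq_left (h.trans hvc)]
    · intro y hy
      rw [uIcc_of_le h] at hy
      simp [hy.2.trans hvc]
  · rcases le_total c u with hcu | huc
    · rw [intervalIntegral.integral_congr_ae (g := fun _ => (0:ℝ))]
      · simp [min_eq_right hcv, min_eq_right hcu]
      · filter_upwards [] with y hy
        rw [uIoc_of_le h] at hy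
        simp [not_le.mpr (lt_of_le_of_lt hcu hy.1)]
    · have hint : ∀ p q : ℝ, IntervalIntegrable (fun y => if y ≤ c then (1:ℝ) else 0) volume p q := by
        intro p q
        have : (fun y => if y ≤ c then (1:ℝ) else 0) = (Iic c).indicator (fun _ => (1:ℝ)) := by
          ext y; simp [Set.indicator_apply, Set.mem_Iic]
        rw [this, intervalIntegrable_iff]
        exact (integrableOn_const measure_Ioc_lt_top.ne).indicator measurableSet_Iic
      rw [← intervalIntegral.integral_add_adjacent_intervals (b := c) (hint u c) (hint c v)]
      have h1 : (∫ y in u..c, if y ≤ c then (1:ℝ) else 0) = c - u := by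
        rw [intervalIntegral.integral_congr (g := fun _ => (1:ℝ))]
        · simp
        · intro y hy
          rw [uIcc_of_le huc] at hy
          simp [hy.2]
      have h2 : (∫ y in c..v, if y ≤ c then (1:ℝ) else 0) = 0 := by
        rw [intervalIntegral.integral_congr_ae (g := fun _ => (0:ℝ))]
        · simp
        · filter_upwards [] with y hy
          rw [uIoc_of_le hcv] at hy
          simp [not_le.mpr hy.1]
      rw [h1, h2, min_eq_right hcv, min_eq_left huc]; ring

lemma gfun_eq (ℓ x : ℝ) :
    gfun ℓ x = 2 * min x (ℓ/2) - min (x-1) (ℓ/2) - min (x+1) (ℓ/2) := by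
  unfold gfun
  rw [ind_int (ℓ/2) (x-1) x (by linarith), ind_int (ℓ/2) x (x+1) (by linarith)]
  ring

lemma gfun_cont (ℓ : ℝ) : Continuous (gfun ℓ) := by
  have : gfun ℓ = fun x => 2 * min x (ℓ/2) - min (x-1) (ℓ/2) - min (x+1) (ℓ/2) := by
    ext x; exact gfun_eq ℓ x
  rw [this]; fun_prop

lemma lin_int (p q u v : ℝ) : (∫ x in p..q, (u*x + v)) = u*(q^2-p^2)/2 + v*(q-p) := by
  have h : ∀ x : ℝ, HasDerivAt (fun x => u*x^2/2 + v*x) (u*x + v) x := by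
    intro x
    have h1 : HasDerivAt (fun x : ℝ => u*x^2/2 + v*x) (u*(2*x^(2-1))/2 + v*1) x :=
      ((((hasDerivAt_pow 2 x)).const_mul u).div_const 2).add ((hasDerivAt_id x).const_mul v)
    convert h1 using 1; ring
  rw [intervalIntegral.integral_eq_sub_of_hasDerivAt (fun x _ => h x)
    ((Continuous.intervalIntegrable (by fun_prop) p q))]
  ring

lemma gfun_nonneg (ℓ x : ℝ) : 0 ≤ gfun ℓ x := by
  rw [gfun_eq]
  rcases le_total x (ℓ/2) with h | h
  · rw [min_eq_left h, min_eq_left (by linarith : x - 1 ≤ ℓ/2)]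
    have : min (x+1) (ℓ/2) ≤ x + 1 := min_le_left _ _
    linarith
  · rw [min_eq_right h, min_eq_right (by linarith : ℓ/2 ≤ x + 1)]
    have : min (x-1) (ℓ/2) ≤ ℓ/2 := min_le_right _ _
    linarith

lemma gfun_le_one (ℓ x : ℝ) : gfun ℓ x ≤ 1 := by
  rw [gfun_eq]
  rcases le_total x (ℓ/2) with h | h
  · rw [min_eq_left h, min_eq_left (by linarith : x - 1 ≤ ℓ/2)]
    have : x ≤ min (x+1) (ℓ/2) := le_min (by linarith) h
    linarith
  · rw [min_eq_right h, min_eq_right (by linarith : ℓ/2 ≤ x + 1)]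
    have : ℓ/2 - 1 ≤ min (x-1) (ℓ/2) := le_min (by linarith) (by linarith)
    linarith

lemma gfun_zero_left (ℓ x : ℝ) (h : x + 1 ≤ ℓ/2) : gfun ℓ x = 0 := by
  rw [gfun_eq, min_eq_left h, min_eq_left (by linarith), min_eq_left (by linarith)]; ring

lemma gfun_zero_right (ℓ x : ℝ) (h : ℓ/2 ≤ x - 1) : gfun ℓ x = 0 := by
  rw [gfun_eq, min_eq_right h, min_eq_right (by linarith), min_eq_right (by linarith)]; ring

lemma gfun_tent_left (ℓ x : ℝ) (h1 : ℓ/2 - 1 ≤ x) (h2 : x ≤ ℓ/2) : gfun ℓ x = x + 1 - ℓ/2 := by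
  rw [gfun_eq, min_eq_left h2, min_eq_left (by linarith), min_eq_right (by linarith)]; ring

lemma gfun_tent_right (ℓ x : ℝ) (h1 : ℓ/2 ≤ x) (h2 : x ≤ ℓ/2 + 1) : gfun ℓ x = ℓ/2 + 1 - x := by
  rw [gfun_eq, min_eq_right h1, min_eq_left (by linarith), min_eq_right (by linarith)]; ring

lemma gfun_integral (ℓ : ℝ) : ∫ x in (ℓ/2-1)..(ℓ/2+1), gfun ℓ x = 1 := by
  have hi : ∀ p q : ℝ, IntervalIntegrable (gfun ℓ) volume p q :=
    fun p q => (gfun_cont ℓ).intervalIntegrable p q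
  rw [← intervalIntegral.integral_add_adjacent_intervals (b := ℓ/2) (hi _ _) (hi _ _)]
  have e1 : (∫ x in (ℓ/2-1)..(ℓ/2), gfun ℓ x) = ∫ x in (ℓ/2-1)..(ℓ/2), (x + 1 - ℓ/2) := by
    apply intervalIntegral.integral_congr
    intro x hx
    rw [uIcc_of_le (by linarith)] at hx
    exact gfun_tent_left ℓ x hx.1 hx.2
  have e2 : (∫ x in (ℓ/2)..(ℓ/2+1), gfun ℓ x) = ∫ x in (ℓ/2)..(ℓ/2+1), (ℓ/2 + 1 - x) := by
    apply intervalIntegral.integral_congr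
    intro x hx
    rw [uIcc_of_le (by linarith)] at hx
    exact gfun_tent_right ℓ x hx.1 hx.2
  rw [e1, e2]
  have i1 : (∫ x in (ℓ/2-1)..(ℓ/2), (x + 1 - ℓ/2)) = 1/2 := by
    have := lin_int (ℓ/2-1) (ℓ/2) 1 (1 - ℓ/2)
    rw [intervalIntegral.integral_congr (g := fun x => 1*x + (1 - ℓ/2)) (fun x _ => by ring)]
    rw [this]; ring
  have i2 : (∫ x in (ℓ/2)..(ℓ/2+1), (ℓ/2 + 1 - x)) = 1/2 := by
    have := lin_int (ℓ/2) (ℓ/2+1) (-1) (ℓ/2 + 1)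
    rw [intervalIntegral.integral_congr (g := fun x => (-1)*x + (ℓ/2 + 1)) (fun x _ => by ring)]
    rw [this]; ring
  rw [i1, i2]; norm_num

lemma tanh_exp_form (t : ℝ) : Real.tanh t = (exp (2*t) - 1)/(exp (2*t) + 1) := by
  rw [Real.tanh_eq_sinh_div_cosh, Real.sinh_eq, Real.cosh_eq, two_mul, Real.exp_add,
    Real.exp_neg]
  have h1 : 0 < exp t := exp_pos t
  have h2 : 0 < exp t * exp t + 1 := by positivity
  field_simp

lemma my_hasDerivAt_tanh (x : ℝ) : HasDerivAt Real.tanh (1 - Real.tanh x^2) x := by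
  have h1 := (Real.hasDerivAt_sinh x).div (Real.hasDerivAt_cosh x) (ne_of_gt (cosh_pos x))
  have e : Real.tanh = fun y => Real.sinh y / Real.cosh y := funext Real.tanh_eq_sinh_div_cosh
  rw [e]
  convert h1 using 1
  show 1 - (fun y => Real.sinh y / Real.cosh y) x ^ 2 = _
  beta_reduce
  have h2 := Real.cosh_sq_sub_sinh_sq x
  have h3 : Real.cosh x ≠ 0 := ne_of_gt (cosh_pos x)
  field_simp
  all_goals rfl

lemma tanh_sq_lt_one (x : ℝ) : Real.tanh x ^ 2 < 1 := by
  rw [Real.tanh_eq_sinh_div_cosh, div_pow]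
  rw [div_lt_one (by positivity : (0:ℝ) < Real.cosh x ^ 2)]
  nlinarith [Real.cosh_sq_sub_sinh_sq x]

lemma my_continuous_tanh : Continuous Real.tanh := by
  have : Real.tanh = fun x => Real.sinh x / Real.cosh x := by
    ext x; exact Real.tanh_eq_sinh_div_cosh x
  rw [this]
  exact Real.continuous_sinh.div Real.continuous_cosh (fun x => ne_of_gt (cosh_pos x))

lemma tanh_mono_lip {s t : ℝ} (h : s ≤ t) :
    Real.tanh s ≤ Real.tanh t ∧ Real.tanh t - Real.tanh s ≤ t - s := by
  have hftc : ∫ x in s..t, (1 - Real.tanh x ^ 2) = Real.tanh t - Real.tanh s := by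
    apply intervalIntegral.integral_eq_sub_of_hasDerivAt (fun x _ => my_hasDerivAt_tanh x)
    exact (Continuous.intervalIntegrable (by exact continuous_const.sub (my_continuous_tanh.pow 2)) s t)
  constructor
  · have h0 : 0 ≤ ∫ x in s..t, (1 - Real.tanh x ^ 2) :=
      intervalIntegral.integral_nonneg h (fun u _ => by nlinarith [_root_.tanh_sq_lt_one u])
    linarith [hftc]
  · have h1 : (∫ x in s..t, (1 - Real.tanh x ^ 2)) ≤ ∫ x in s..t, (1:ℝ) := by
      apply intervalIntegral.integral_mono_on h
      · exact (Continuous.intervalIntegrable (by exact continuous_const.sub (my_continuous_tanh.pow 2)) s t)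
      · exact (Continuous.intervalIntegrable continuous_const s t)
      · intro u _; nlinarith [sq_nonneg (Real.tanh u)]
    simp at h1
    linarith [hftc]

set_option maxHeartbeats 2000000

lemma key (β lam ℓ j : ℝ) (m : ℝ → ℝ) (hβ : 0 < β) (hlam : 0 < lam) (hℓ : 4 < ℓ)
    (hsol : IsStationarySolution β lam ℓ j m) :
    0 ≤ j ∧
    |j*ℓ - Real.tanh (β*lam/2)| ≤
      (β*lam/(1 - Real.tanh (β*lam)^2) + β*lam)/ℓ ∧
    (∀ x ∈ Icc (0:ℝ) (ℓ/2-1), m x = -2*j*x) ∧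
    (∀ x ∈ Icc (ℓ/2+1) ℓ, m x = 2*j*(ℓ-x)) := by
  obtain ⟨⟨hm0, hder⟩, hmL⟩ := hsol
  set A := β*lam with hA_def
  have hA : 0 < A := mul_pos hβ hlam
  set a := ℓ/2 - 1 with ha_def
  set b := ℓ/2 + 1 with hb_def
  have hab : a < b := by rw [ha_def, hb_def]; linarith
  have ha0 : 0 < a := by rw [ha_def]; linarith
  have hbl : b < ℓ := by rw [hb_def]; linarith
  set D : ℝ → ℝ := fun x => -2*j + A*(1 - m x^2)*gfun ℓ x with hD_def
  -- continuity
  have hm_cont : ContinuousOn m (Icc 0 ℓ) :=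
    fun x hx => ((hder x hx).continuousAt).continuousWithinAt
  have hD_cont : ContinuousOn D (Icc 0 ℓ) :=
    continuousOn_const.add ((continuousOn_const.mul
      (continuousOn_const.sub (hm_cont.pow 2))).mul (gfun_cont ℓ).continuousOn)
  -- FTC tool
  have hftc : ∀ u v, 0 ≤ u → u ≤ v → v ≤ ℓ → (∫ x in u..v, D x) = m v - m u := by
    intro u v h0 huv hvl
    apply intervalIntegral.integral_eq_sub_of_hasDerivAt
    · intro x hx
      rw [uIcc_of_le huv] at hx
      exact hder x ⟨le_trans h0 hx.1, le_trans hx.2 hvl⟩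
    · apply ContinuousOn.intervalIntegrable
      apply hD_cont.mono
      rw [uIcc_of_le huv]
      exact fun x hx => ⟨le_trans h0 hx.1, le_trans hx.2 hvl⟩
  -- left linear region
  have hleft : ∀ x ∈ Icc (0:ℝ) a, m x = -2*j*x := by
    intro x hx
    have h1 : (∫ y in (0:ℝ)..x, D y) = m x - m 0 :=
      hftc 0 x le_rfl hx.1 (by linarith [hx.2])
    have h2 : (∫ y in (0:ℝ)..x, D y) = ∫ y in (0:ℝ)..x, (-2*j) := by
      apply intervalIntegral.integral_congr
      intro y hy
      rw [uIcc_of_le hx.1] at hy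
      have : gfun ℓ y = 0 := gfun_zero_left ℓ y (by
        have := hy.2; have := hx.2; rw [ha_def] at *; linarith)
      simp [hD_def, this]
    rw [h2, intervalIntegral.integral_const, hm0, smul_eq_mul] at h1
    nlinarith [h1]
  -- right linear region
  have hright : ∀ x ∈ Icc b ℓ, m x = 2*j*(ℓ-x) := by
    intro x hx
    have h1 : (∫ y in x..ℓ, D y) = m ℓ - m x :=
      hftc x ℓ (by linarith [hx.1]) hx.2 le_rfl
    have h2 : (∫ y in x..ℓ, D y) = ∫ y in x..ℓ, (-2*j) := by
      apply intervalIntegral.integral_congr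
      intro y hy
      rw [uIcc_of_le hx.2] at hy
      have : gfun ℓ y = 0 := gfun_zero_right ℓ y (by
        have := hy.1; have := hx.1; rw [hb_def] at *; linarith)
      simp [hD_def, this]
    rw [h2, intervalIntegral.integral_const, hmL, smul_eq_mul] at h1
    nlinarith [h1]
  set c := j*(ℓ-2) with hc_def
  have hma : m a = -c := by
    rw [hleft a ⟨le_of_lt ha0, le_rfl⟩, ha_def, hc_def]; ring
  have hmb : m b = c := by
    rw [hright b ⟨le_rfl, le_of_lt hbl⟩, hb_def, hc_def]; ring
  have haIcc : a ∈ Icc (0:ℝ) ℓ := ⟨le_of_lt ha0, by linarith⟩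
  have hbIcc : b ∈ Icc (0:ℝ) ℓ := ⟨by linarith, le_of_lt hbl⟩
  -- j ≥ 0
  have hj0 : 0 ≤ j := by
    by_contra hj
    push_neg at hj
    have hc_neg : c < 0 := by rw [hc_def]; nlinarith
    set S := {x ∈ Icc a b | 0 ≤ m x} with hS_def
    have hSne : S.Nonempty := ⟨a, ⟨⟨le_rfl, le_of_lt hab⟩, by rw [hma]; linarith⟩⟩
    have hScl : IsClosed S := by
      have : S = Icc a b ∩ m ⁻¹' (Ici 0) := by ext x; simp only [hS_def, mem_sep_iff, mem_inter_iff, mem_preimage, mem_Ici]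
      rw [this]
      apply ContinuousOn.preimage_isClosed_of_isClosed
        (hm_cont.mono (Icc_subset_Icc (le_of_lt ha0) (le_of_lt hbl))) isClosed_Icc isClosed_Ici
    have hScomp : IsCompact S :=
      IsCompact.of_isClosed_subset isCompact_Icc hScl (fun x hx => hx.1)
    set s := sSup S with hs_def
    have hsS : s ∈ S := hScomp.sSup_mem hSne
    have hsb : s < b := by
      rcases lt_or_eq_of_le hsS.1.2 with h | h
      · exact h
      · exfalso; have := hsS.2; rw [h, hmb] at this; linarith
    have hsub : Ioc s b ⊆ Icc (0:ℝ) ℓ := fun x hx =>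
      ⟨by linarith [hsS.1.1, le_of_lt hx.1], by linarith [hx.2]⟩
    -- m s ≤ 0
    have hms_le : m s ≤ 0 := by
      have hne : (𝓝[Ioc s b] s).NeBot := by
        rw [← mem_closure_iff_nhdsWithin_neBot, closure_Ioc (ne_of_lt hsb)]
        exact ⟨le_rfl, le_of_lt hsb⟩
      have htend : Filter.Tendsto m (𝓝[Ioc s b] s) (𝓝 (m s)) :=
        ((hm_cont s ⟨by linarith [hsS.1.1], by linarith [hsS.1.2]⟩).mono hsub)
      apply le_of_tendsto htend
      filter_upwards [eventually_mem_nhdsWithin] with x hx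
      by_contra hpos
      push_neg at hpos
      have hxS : x ∈ S := ⟨⟨by linarith [hsS.1.1, le_of_lt hx.1], hx.2⟩, le_of_lt hpos⟩
      have := le_csSup hScomp.bddAbove hxS
      linarith [hx.1]
    have hms : m s = 0 := le_antisymm hms_le hsS.2
    -- derivative positive at s
    have hd : HasDerivAt m (-2*j + A*(1 - m s^2)*gfun ℓ s) s :=
      hder s ⟨by linarith [hsS.1.1], by linarith [hsS.1.2]⟩
    have hdpos : 0 < -2*j + A*(1 - m s^2)*gfun ℓ s := by
      rw [hms]
      have := gfun_nonneg ℓ s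
      nlinarith
    rw [hasDerivAt_iff_tendsto_slope] at hd
    have hev1 : ∀ᶠ x in 𝓝[>] s, 0 < slope m s x := by
      have h1 : ∀ᶠ x in 𝓝[≠] s, 0 < slope m s x := hd (Ioi_mem_nhds hdpos)
      exact h1.filter_mono (nhdsWithin_mono s (fun x hx => ne_of_gt hx))
    have hev2 : ∀ᶠ x in 𝓝[>] s, x ∈ Ioc s b :=
      Filter.eventually_of_mem (Ioc_mem_nhdsGT_of_mem ⟨le_rfl, hsb⟩) (fun x hx => hx)
    obtain ⟨x, hx1, hx2⟩ := (hev1.and hev2).exists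
    rw [slope_def_field, hms] at hx1
    have hxs : 0 < x - s := by linarith [hx2.1]
    have hmx : 0 < m x := by
      have := mul_pos hx1 hxs
      rw [div_mul_cancel₀] at this
      · simpa using this
      · linarith
    have hxS : x ∈ S := ⟨⟨by linarith [hsS.1.1, hx2.1], hx2.2⟩, le_of_lt hmx⟩
    have := le_csSup hScomp.bddAbove hxS
    linarith [hx2.1]
  -- c nonneg, basic
  have hc0 : 0 ≤ c := by rw [hc_def]; nlinarith
  -- U' derivative helper for products with exponentials
  have hexp : ∀ (k x : ℝ), HasDerivAt (fun y => exp (k*y)) (exp (k*x) * k) x := by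
    intro k x
    have h := ((hasDerivAt_id x).const_mul k).exp
    simpa using h
  -- m < 1 on [a,b]
  have hm_lt_one : ∀ x ∈ Icc a b, m x < 1 := by
    by_contra hcon
    push_neg at hcon
    obtain ⟨x0, hx0, hx0m⟩ := hcon
    set T := {x ∈ Icc a b | 1 ≤ m x} with hT_def
    have hTne : T.Nonempty := ⟨x0, hx0, hx0m⟩
    have hTcl : IsClosed T := by
      have : T = Icc a b ∩ m ⁻¹' (Ici 1) := by
        ext x; simp only [hT_def, mem_sep_iff, mem_inter_iff, mem_preimage, mem_Ici]
      rw [this]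
      apply ContinuousOn.preimage_isClosed_of_isClosed
        (hm_cont.mono (Icc_subset_Icc (le_of_lt ha0) (le_of_lt hbl))) isClosed_Icc isClosed_Ici
    have hTcomp : IsCompact T :=
      IsCompact.of_isClosed_subset isCompact_Icc hTcl (fun x hx => hx.1)
    set t := sInf T with ht_def
    have htT : t ∈ T := hTcomp.sInf_mem hTne
    have hat : a < t := by
      rcases lt_or_eq_of_le htT.1.1 with h | h
      · exact h
      · exfalso; have := htT.2; rw [← h, hma] at this; linarith
    have hm_lt : ∀ x ∈ Ico a t, m x < 1 := by
      intro x hx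
      by_contra hge
      push_neg at hge
      have hxT : x ∈ T := ⟨⟨hx.1, le_trans hx.2.le htT.1.2⟩, hge⟩
      have := csInf_le hTcomp.bddBelow hxT
      linarith [hx.2]
    have hmt_le : m t ≤ 1 := by
      have hne : (𝓝[Ico a t] t).NeBot := by
        rw [← mem_closure_iff_nhdsWithin_neBot, closure_Ico (ne_of_lt hat)]
        exact ⟨le_of_lt hat, le_rfl⟩
      have hsub2 : Ico a t ⊆ Icc (0:ℝ) ℓ := fun y hy =>
        ⟨by linarith [hy.1], by linarith [hy.2, htT.1.2]⟩
      have htend : Filter.Tendsto m (𝓝[Ico a t] t) (𝓝 (m t)) :=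
        (hm_cont t ⟨by linarith, by linarith [htT.1.2]⟩).mono hsub2
      apply le_of_tendsto htend
      filter_upwards [eventually_mem_nhdsWithin] with y hy
      exact le_of_lt (hm_lt y hy)
    have hm_le : ∀ x ∈ Icc a t, m x ≤ 1 := by
      intro x hx
      rcases lt_or_eq_of_le hx.2 with h | h
      · exact le_of_lt (hm_lt x ⟨hx.1, h⟩)
      · rw [h]; exact hmt_le
    have hmt : m t = 1 := le_antisymm hmt_le htT.2
    -- the auxiliary function U
    set U : ℝ → ℝ := fun x => (1 - m x) * exp (2*A*x) with hU_def
    set U' : ℝ → ℝ := fun x => (2*A*(1 - m x) - D x) * exp (2*A*x) with hU'_def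
    have hU : ∀ x ∈ Icc (0:ℝ) ℓ, HasDerivAt U (U' x) x := by
      intro x hx
      have h1 : HasDerivAt (fun y => 1 - m y) (-(D x)) x := (hder x hx).const_sub 1
      have h2 := hexp (2*A) x
      have h3 := h1.mul h2
      convert h3 using 1
      show (2*A*(1 - m x) - D x) * exp (2*A*x) = _
      ring
      all_goals rfl
    have hU'_cont : ContinuousOn U' (Icc 0 ℓ) := by
      apply ContinuousOn.mul
      · exact (continuousOn_const.mul (continuousOn_const.sub hm_cont)).sub hD_cont
      · exact (Real.continuous_exp.comp (continuous_const.mul continuous_id)).continuousOn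
    have hsub3 : Icc a t ⊆ Icc (0:ℝ) ℓ := fun y hy =>
      ⟨by linarith [hy.1], by linarith [hy.2, htT.1.2]⟩
    have hint : (∫ x in a..t, U' x) = U t - U a := by
      apply intervalIntegral.integral_eq_sub_of_hasDerivAt
      · intro x hx
        rw [uIcc_of_le (le_of_lt hat)] at hx
        exact hU x (hsub3 hx)
      · apply ContinuousOn.intervalIntegrable
        apply hU'_cont.mono
        rw [uIcc_of_le (le_of_lt hat)]
        exact hsub3
    have hpos : 0 ≤ ∫ x in a..t, U' x := by
      apply intervalIntegral.integral_nonneg (le_of_lt hat)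
      intro x hx
      apply mul_nonneg _ (le_of_lt (exp_pos _))
      have hg0 := gfun_nonneg ℓ x
      have hg1 := gfun_le_one ℓ x
      have hm1 := hm_le x hx
      have hprod : (1 + m x) * gfun ℓ x ≤ 2 := by
        rcases le_or_gt 0 (1 + m x) with h | h
        · nlinarith
        · nlinarith
      have hexpand : 2*A*(1 - m x) - D x = A*(1 - m x)*(2 - (1 + m x)*gfun ℓ x) + 2*j := by
        simp only [hD_def]; ring
      rw [hexpand]
      have : 0 ≤ A*(1 - m x)*(2 - (1 + m x)*gfun ℓ x) :=
        mul_nonneg (mul_nonneg hA.le (by linarith)) (by linarith)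
      linarith
    have hUt : U t = 0 := by simp only [hU_def, hmt]; ring
    have hUa : 0 < U a := by
      simp only [hU_def, hma]
      have : (0:ℝ) < 1 - -c := by linarith
      positivity
    rw [hint, hUt] at hpos
    linarith
  -- m > -1 on [a,b]
  have hm_gt_negone : ∀ x ∈ Icc a b, -1 < m x := by
    by_contra hcon
    push_neg at hcon
    obtain ⟨x0, hx0, hx0m⟩ := hcon
    set T := {x ∈ Icc a b | m x ≤ -1} with hT_def
    have hTne : T.Nonempty := ⟨x0, hx0, hx0m⟩
    have hTcl : IsClosed T := by
      have : T = Icc a b ∩ m ⁻¹' (Iic (-1)) := by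
        ext x; simp only [hT_def, mem_sep_iff, mem_inter_iff, mem_preimage, mem_Iic]
      rw [this]
      apply ContinuousOn.preimage_isClosed_of_isClosed
        (hm_cont.mono (Icc_subset_Icc (le_of_lt ha0) (le_of_lt hbl))) isClosed_Icc isClosed_Iic
    have hTcomp : IsCompact T :=
      IsCompact.of_isClosed_subset isCompact_Icc hTcl (fun x hx => hx.1)
    set t := sSup T with ht_def
    have htT : t ∈ T := hTcomp.sSup_mem hTne
    have htb : t < b := by
      rcases lt_or_eq_of_le htT.1.2 with h | h
      · exact h
      · exfalso; have := htT.2; rw [h, hmb] at this; linarith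
    have hm_gt : ∀ x ∈ Ioc t b, -1 < m x := by
      intro x hx
      by_contra hge
      push_neg at hge
      have hxT : x ∈ T := ⟨⟨le_trans htT.1.1 hx.1.le, hx.2⟩, hge⟩
      have := le_csSup hTcomp.bddAbove hxT
      linarith [hx.1]
    have hmt_ge : -1 ≤ m t := by
      have hne : (𝓝[Ioc t b] t).NeBot := by
        rw [← mem_closure_iff_nhdsWithin_neBot, closure_Ioc (ne_of_lt htb)]
        exact ⟨le_rfl, le_of_lt htb⟩
      have hsub2 : Ioc t b ⊆ Icc (0:ℝ) ℓ := fun y hy =>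
        ⟨by linarith [hy.1, htT.1.1], by linarith [hy.2]⟩
      have htend : Filter.Tendsto m (𝓝[Ioc t b] t) (𝓝 (m t)) :=
        (hm_cont t ⟨by linarith [htT.1.1], by linarith⟩).mono hsub2
      apply ge_of_tendsto htend
      filter_upwards [eventually_mem_nhdsWithin] with y hy
      exact le_of_lt (hm_gt y hy)
    have hm_ge : ∀ x ∈ Icc t b, -1 ≤ m x := by
      intro x hx
      rcases lt_or_eq_of_le hx.1 with h | h
      · exact le_of_lt (hm_gt x ⟨h, hx.2⟩)
      · rw [← h]; exact hmt_ge
    have hmt : m t = -1 := le_antisymm htT.2 hmt_ge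
    set V : ℝ → ℝ := fun x => (1 + m x) * exp (-(2*A*x)) with hV_def
    set V' : ℝ → ℝ := fun x => (D x - 2*A*(1 + m x)) * exp (-(2*A*x)) with hV'_def
    have hV : ∀ x ∈ Icc (0:ℝ) ℓ, HasDerivAt V (V' x) x := by
      intro x hx
      have h1 : HasDerivAt (fun y => 1 + m y) (D x) x := (hder x hx).const_add 1
      have h2 := hexp (-(2*A)) x
      have h2' : HasDerivAt (fun y => exp (-(2*A*y))) (exp (-(2*A*x)) * (-(2*A))) x := by
        convert h2 using 2 <;> ring
      have h3 := h1.mul h2'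
      convert h3 using 1
      show (D x - 2*A*(1 + m x)) * exp (-(2*A*x)) = _
      ring
      all_goals rfl
    have hV'_cont : ContinuousOn V' (Icc 0 ℓ) := by
      apply ContinuousOn.mul
      · exact hD_cont.sub (continuousOn_const.mul (continuousOn_const.add hm_cont))
      · exact (Real.continuous_exp.comp (continuous_const.mul continuous_id).neg).continuousOn
    have hsub3 : Icc t b ⊆ Icc (0:ℝ) ℓ := fun y hy =>
      ⟨by linarith [hy.1, htT.1.1], by linarith [hy.2]⟩
    have hint : (∫ x in t..b, V' x) = V b - V t := by
      apply intervalIntegral.integral_eq_sub_of_hasDerivAt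
      · intro x hx
        rw [uIcc_of_le (le_of_lt htb)] at hx
        exact hV x (hsub3 hx)
      · apply ContinuousOn.intervalIntegrable
        apply hV'_cont.mono
        rw [uIcc_of_le (le_of_lt htb)]
        exact hsub3
    have hneg : (∫ x in t..b, V' x) ≤ 0 := by
      have h0 : (∫ x in t..b, V' x) ≤ ∫ x in t..b, (0:ℝ) := by
        apply intervalIntegral.integral_mono_on (le_of_lt htb)
        · apply ContinuousOn.intervalIntegrable
          apply hV'_cont.mono
          rw [uIcc_of_le (le_of_lt htb)]
          exact hsub3
        · exact intervalIntegrable_const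
        · intro x hx
          have hg0 := gfun_nonneg ℓ x
          have hg1 := gfun_le_one ℓ x
          have hm1 := hm_ge x hx
          have hm2 : m x < 1 := hm_lt_one x ⟨le_trans htT.1.1 hx.1, hx.2⟩
          apply mul_nonpos_of_nonpos_of_nonneg _ (le_of_lt (exp_pos _))
          have hprod : (1 - m x) * gfun ℓ x ≤ 2 := by nlinarith
          have hexpand : D x - 2*A*(1 + m x) = A*(1 + m x)*((1 - m x)*gfun ℓ x - 2) - 2*j := by
            simp only [hD_def]; ring
          rw [hexpand]
          have : A*(1 + m x)*((1 - m x)*gfun ℓ x - 2) ≤ 0 :=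
            mul_nonpos_of_nonneg_of_nonpos (mul_nonneg hA.le (by linarith)) (by linarith)
          linarith
      simpa using h0
    have hVt : V t = 0 := by simp only [hV_def, hmt]; ring
    have hVb : 0 < V b := by
      simp only [hV_def, hmb]
      have : (0:ℝ) < 1 + c := by linarith
      positivity
    rw [hint, hVt] at hneg
    linarith
  -- upper bound on j : 2 j ℓ ≤ A
  have habIcc : Icc a b ⊆ Icc (0:ℝ) ℓ := Icc_subset_Icc (le_of_lt ha0) (le_of_lt hbl)
  have hgab : (∫ x in a..b, gfun ℓ x) = 1 := by
    have := gfun_integral ℓ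
    rw [ha_def, hb_def]
    exact this
  have hjle : 2*j*ℓ ≤ A := by
    have h1 : (∫ x in a..b, D x) = m b - m a := hftc a b ha0.le hab.le hbl.le
    have h2 : (∫ x in a..b, D x) ≤ ∫ x in a..b, (-2*j + A * gfun ℓ x) := by
      apply intervalIntegral.integral_mono_on hab.le
      · exact ((hD_cont.mono (by rw [uIcc_of_le hab.le]; exact habIcc)).intervalIntegrable)
      · exact (Continuous.intervalIntegrable (by fun_prop) a b).add
          ((continuous_const.mul (gfun_cont ℓ)).intervalIntegrable a b)
      · intro x hx
        have hg0 := gfun_nonneg ℓ x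
        simp only [hD_def]
        nlinarith [mul_nonneg (mul_nonneg hA.le (sq_nonneg (m x))) hg0]
    have h3 : (∫ x in a..b, (-2*j + A * gfun ℓ x)) = -2*j*(b-a) + A := by
      rw [intervalIntegral.integral_add (f := fun _ => -2*j) (g := fun x => A * gfun ℓ x) (Continuous.intervalIntegrable (by fun_prop) a b)
        ((continuous_const.mul (gfun_cont ℓ)).intervalIntegrable a b),
        intervalIntegral.integral_const, intervalIntegral.integral_const_mul, hgab,
        smul_eq_mul]
      ring
    rw [h1, hma, hmb] at h2
    rw [h3] at h2
    have hba : b - a = 2 := by rw [ha_def, hb_def]; ring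
    rw [hba] at h2
    rw [hc_def] at h2
    nlinarith
  -- the function q = artanh ∘ m
  set q : ℝ → ℝ := fun x => (Real.log (1 + m x) - Real.log (1 - m x))/2 with hq_def
  set Q : ℝ → ℝ := fun x => D x / (1 - m x^2) with hQ_def
  have hone_sub : ∀ x ∈ Icc a b, 0 < 1 - m x ∧ 0 < 1 + m x ∧ 0 < 1 - m x^2 := by
    intro x hx
    have h1 := hm_lt_one x hx
    have h2 := hm_gt_negone x hx
    refine ⟨by linarith, by linarith, by nlinarith⟩
  have hq_deriv : ∀ x ∈ Icc a b, HasDerivAt q (Q x) x := by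
    intro x hx
    obtain ⟨h1m, h1p, h1sq⟩ := hone_sub x hx
    have hd := hder x (habIcc hx)
    have hl1 : HasDerivAt (fun y => Real.log (1 + m y)) (D x / (1 + m x)) x :=
      HasDerivAt.log (hd.const_add 1) (ne_of_gt h1p)
    have hl2 : HasDerivAt (fun y => Real.log (1 - m y)) (-(D x) / (1 - m x)) x :=
      HasDerivAt.log (hd.const_sub 1) (ne_of_gt h1m)
    have h3 := (hl1.sub hl2).div_const 2
    convert h3 using 1
    show D x / (1 - m x^2) = _
    field_simp
    ring
    all_goals rfl
  have hQ_cont : ContinuousOn Q (Icc a b) := by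
    apply ContinuousOn.div (hD_cont.mono habIcc)
      (continuousOn_const.sub ((hm_cont.mono habIcc).pow 2))
    intro x hx
    exact ne_of_gt (hone_sub x hx).2.2
  have hqftc : ∀ u v, a ≤ u → u ≤ v → v ≤ b → (∫ x in u..v, Q x) = q v - q u := by
    intro u v h1 h2 h3
    apply intervalIntegral.integral_eq_sub_of_hasDerivAt
    · intro x hx
      rw [uIcc_of_le h2] at hx
      exact hq_deriv x ⟨le_trans h1 hx.1, le_trans hx.2 h3⟩
    · apply ContinuousOn.intervalIntegrable
      apply hQ_cont.mono
      rw [uIcc_of_le h2]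
      exact fun x hx => ⟨le_trans h1 hx.1, le_trans hx.2 h3⟩
  -- integral of g over subintervals is ≤ 1
  have hgint : ∀ p r : ℝ, IntervalIntegrable (gfun ℓ) volume p r :=
    fun p r => (gfun_cont ℓ).intervalIntegrable p r
  have hgsub : ∀ u v, a ≤ u → u ≤ v → v ≤ b → (∫ x in u..v, gfun ℓ x) ≤ 1 := by
    intro u v h1 h2 h3
    have e1 : (∫ x in a..u, gfun ℓ x) + (∫ x in u..v, gfun ℓ x) = ∫ x in a..v, gfun ℓ x :=
      intervalIntegral.integral_add_adjacent_intervals (hgint a u) (hgint u v)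
    have e2 : (∫ x in a..v, gfun ℓ x) + (∫ x in v..b, gfun ℓ x) = ∫ x in a..b, gfun ℓ x :=
      intervalIntegral.integral_add_adjacent_intervals (hgint a v) (hgint v b)
    have n1 : 0 ≤ ∫ x in a..u, gfun ℓ x :=
      intervalIntegral.integral_nonneg h1 (fun x _ => gfun_nonneg ℓ x)
    have n2 : 0 ≤ ∫ x in v..b, gfun ℓ x :=
      intervalIntegral.integral_nonneg h3 (fun x _ => gfun_nonneg ℓ x)
    rw [hgab] at e2
    linarith
  -- pointwise bound : Q ≤ A g
  have hQle : ∀ x ∈ Icc a b, Q x ≤ A * gfun ℓ x := by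
    intro x hx
    obtain ⟨h1m, h1p, h1sq⟩ := hone_sub x hx
    simp only [hQ_def, hD_def]
    rw [div_le_iff₀ h1sq]
    have hg0 := gfun_nonneg ℓ x
    nlinarith [mul_nonneg (mul_nonneg hA.le hg0) (sq_nonneg (m x))]
  have hAg_int : ∀ u v : ℝ, IntervalIntegrable (fun x => A * gfun ℓ x) volume u v :=
    fun u v => (continuous_const.mul (gfun_cont ℓ)).intervalIntegrable u v
  have hQ_int : ∀ u v, a ≤ u → u ≤ v → v ≤ b → IntervalIntegrable Q volume u v := by
    intro u v h1 h2 h3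
    apply ContinuousOn.intervalIntegrable
    apply hQ_cont.mono
    rw [uIcc_of_le h2]
    exact fun x hx => ⟨le_trans h1 hx.1, le_trans hx.2 h3⟩
  have hQint_le : ∀ u v, a ≤ u → u ≤ v → v ≤ b → (∫ x in u..v, Q x) ≤ A := by
    intro u v h1 h2 h3
    have hm1 : (∫ x in u..v, Q x) ≤ ∫ x in u..v, A * gfun ℓ x := by
      apply intervalIntegral.integral_mono_on h2 (hQ_int u v h1 h2 h3) (hAg_int u v)
      exact fun x hx => hQle x ⟨le_trans h1 hx.1, le_trans hx.2 h3⟩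
    have hm2 : (∫ x in u..v, A * gfun ℓ x) = A * ∫ x in u..v, gfun ℓ x := by
      rw [intervalIntegral.integral_const_mul]
    have hm3 : A * (∫ x in u..v, gfun ℓ x) ≤ A * 1 :=
      mul_le_mul_of_nonneg_left (hgsub u v h1 h2 h3) hA.le
    rw [hm2] at hm1
    linarith
  -- values of q at the endpoints
  have hc1 : c < 1 := by
    have := hm_gt_negone a ⟨le_rfl, hab.le⟩
    rw [hma] at this
    linarith
  have h1pc : (0:ℝ) < 1 + c := by linarith
  have h1mc : (0:ℝ) < 1 - c := by linarith
  have hqa : q a = (Real.log (1 - c) - Real.log (1 + c))/2 := by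
    simp only [hq_def]
    rw [show 1 + m a = 1 - c by rw [hma]; ring, show 1 - m a = 1 + c by rw [hma]; ring]
  have hqb : q b = (Real.log (1 + c) - Real.log (1 - c))/2 := by
    simp only [hq_def]
    rw [show 1 + m b = 1 + c by rw [hmb], show 1 - m b = 1 - c by rw [hmb]]
  have hlog_le : Real.log (1 - c) ≤ Real.log (1 + c) :=
    Real.log_le_log h1mc (by linarith)
  have hqa_np : q a ≤ 0 := by rw [hqa]; linarith
  have hqb_nn : 0 ≤ q b := by rw [hqb]; linarith
  have hqab_sum : q a = - q b := by rw [hqa, hqb]; ring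
  -- q is bounded by A on [a,b]
  have hq_ub : ∀ x ∈ Icc a b, q x ≤ A := by
    intro x hx
    have h1 : (∫ y in a..x, Q y) = q x - q a := hqftc a x le_rfl hx.1 hx.2
    have h2 := hQint_le a x le_rfl hx.1 hx.2
    rw [h1] at h2
    linarith
  have hq_lb : ∀ x ∈ Icc a b, -A ≤ q x := by
    intro x hx
    have h1 : (∫ y in x..b, Q y) = q b - q x := hqftc x b hx.1 hx.2 le_rfl
    have h2 := hQint_le x b hx.1 hx.2 le_rfl
    rw [h1] at h2
    linarith
  -- hence |m| ≤ tanh A on [a,b]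
  have hE : (0:ℝ) < exp (2*A) := exp_pos _
  have hm_tanh : ∀ x ∈ Icc a b, |m x| ≤ Real.tanh A := by
    intro x hx
    obtain ⟨h1m, h1p, h1sq⟩ := hone_sub x hx
    rw [abs_le, tanh_exp_form]
    have hub := hq_ub x hx
    have hlb := hq_lb x hx
    simp only [hq_def] at hub hlb
    constructor
    · rw [neg_le, le_div_iff₀ (by linarith : (0:ℝ) < exp (2*A) + 1)]
      have h5 : 1 - m x ≤ exp (2*A) * (1 + m x) := by
        have h6 : Real.log (1 - m x) ≤ Real.log (exp (2*A) * (1 + m x)) := by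
          rw [Real.log_mul (exp_ne_zero _) (ne_of_gt h1p), Real.log_exp]
          linarith
        exact (Real.log_le_log_iff h1m (by positivity)).1 h6
      nlinarith
    · rw [le_div_iff₀ (by linarith : (0:ℝ) < exp (2*A) + 1)]
      have h5 : 1 + m x ≤ exp (2*A) * (1 - m x) := by
        have h6 : Real.log (1 + m x) ≤ Real.log (exp (2*A) * (1 - m x)) := by
          rw [Real.log_mul (exp_ne_zero _) (ne_of_gt h1m), Real.log_exp]
          linarith
        exact (Real.log_le_log_iff h1p (by positivity)).1 h6
      nlinarith
  set δ := 1 - Real.tanh A ^ 2 with hδ_def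
  have hδ : 0 < δ := by
    have := _root_.tanh_sq_lt_one A
    rw [hδ_def]; linarith
  have hδ1 : δ ≤ 1 := by
    rw [hδ_def]; nlinarith [sq_nonneg (Real.tanh A)]
  have hm_sq : ∀ x ∈ Icc a b, δ ≤ 1 - m x^2 := by
    intro x hx
    have h1 := hm_tanh x hx
    have h2 : m x ^2 ≤ Real.tanh A ^2 := sq_le_sq' (by linarith [abs_le.1 h1]) (abs_le.1 h1).2
    rw [hδ_def]; linarith
  -- pointwise lower bound Q ≥ A g - 2 j / δ
  have hQge : ∀ x ∈ Icc a b, A * gfun ℓ x - 2*j/δ ≤ Q x := by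
    intro x hx
    obtain ⟨h1m, h1p, h1sq⟩ := hone_sub x hx
    have hsq := hm_sq x hx
    have hdivle : 2*j/(1 - m x^2) ≤ 2*j/δ := by
      rcases eq_or_lt_of_le hj0 with h | h
      · rw [← h]; norm_num
      · apply div_le_div_of_nonneg_left (by linarith) hδ hsq
    have hid : Q x = A * gfun ℓ x - 2*j/(1 - m x^2) := by
      simp only [hQ_def, hD_def]
      field_simp
      ring
    rw [hid]
    linarith
  -- integral identity : 2 q b = ∫ Q  and lower bound
  have hkey : A - 4*j/δ ≤ 2 * q b := by
    have h1 : (∫ x in a..b, Q x) = q b - q a := hqftc a b le_rfl hab.le le_rfl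
    have h2 : (∫ x in a..b, (A * gfun ℓ x - 2*j/δ)) ≤ ∫ x in a..b, Q x := by
      apply intervalIntegral.integral_mono_on hab.le
        ((hAg_int a b).sub intervalIntegrable_const) (hQ_int a b le_rfl hab.le le_rfl)
      exact fun x hx => hQge x hx
    have h3 : (∫ x in a..b, (A * gfun ℓ x - 2*j/δ)) = A - 2*j/δ*(b-a) := by
      rw [intervalIntegral.integral_sub (hAg_int a b) intervalIntegrable_const,
        intervalIntegral.integral_const_mul, hgab, intervalIntegral.integral_const,
        smul_eq_mul]
      ring
    have hba : b - a = 2 := by rw [ha_def, hb_def]; ring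
    rw [h3, hba, h1, hqab_sum] at h2
    have h4 : 2*j/δ*2 = 4*j/δ := by ring
    linarith
  have hqb_ub : 2 * q b ≤ A := by
    have h1 : (∫ x in a..b, Q x) = q b - q a := hqftc a b le_rfl hab.le le_rfl
    have h2 := hQint_le a b le_rfl hab.le le_rfl
    rw [h1, hqab_sum] at h2
    linarith
  -- c = tanh (q b)
  have hc_tanh : Real.tanh (q b) = c := by
    rw [tanh_exp_form]
    have hqb2 : 2 * q b = Real.log ((1+c)/(1-c)) := by
      rw [hqb, Real.log_div (ne_of_gt h1pc) (ne_of_gt h1mc)]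
      ring
    rw [hqb2, Real.exp_log (by positivity)]
    have hfrac : (0:ℝ) < (1+c)/(1-c) := by positivity
    rw [div_eq_iff (by linarith : (1+c)/(1-c) + 1 ≠ 0)]
    field_simp
    ring
  -- |c - tanh(A/2)| ≤ 2j/δ
  have htanh_close : 0 ≤ Real.tanh (A/2) - c ∧ Real.tanh (A/2) - c ≤ 2*j/δ := by
    have hqble : q b ≤ A/2 := by linarith
    have ⟨hmono, hlip⟩ := tanh_mono_lip hqble
    rw [hc_tanh] at hmono hlip
    constructor
    · linarith
    · have h42 : 4*j/δ = 2*(2*j/δ) := by ring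
      have : A/2 - q b ≤ 2*j/δ := by linarith
      linarith
  -- final bound
  have hjA : 2*j ≤ A/ℓ := by
    rw [le_div_iff₀ (by linarith : (0:ℝ) < ℓ)]
    linarith
  have hP1 : Real.tanh (A/2) - c ≤ A/(δ*ℓ) := by
    have h1 : 2*j/δ ≤ (A/ℓ)/δ := (div_le_div_iff_of_pos_right hδ).2 hjA
    have h2 : A/ℓ/δ = A/(δ*ℓ) := by rw [div_div, mul_comm]
    linarith [htanh_close.2]
  refine ⟨hj0, ?_, hleft, hright⟩
  have hsplit : (A/δ + A)/ℓ = A/(δ*ℓ) + A/ℓ := by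
    rw [add_div, div_div]
  have hjlc : j*ℓ = c + 2*j := by rw [hc_def]; ring
  have hpos1 : 0 ≤ A/(δ*ℓ) := by positivity
  have hpos2 : 0 ≤ A/ℓ := by positivity
  rw [abs_le, hsplit]
  exact ⟨by linarith [htanh_close.1, htanh_close.2, hP1], by linarith [htanh_close.1]⟩

/-- Theorem 3.1, (3.9): as `l → ∞` the profile in macroscopic variables converges to `M`. -/
theorem stationary_macroscopic_limit (β lam : ℝ) (hβ : 0 < β) (hlam : 0 < lam) :
    ∀ r ∈ Icc (0 : ℝ) 1, r ≠ 1 / 2 → ∀ ε > (0 : ℝ), ∃ L > (4 : ℝ), ∀ ℓ > L,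
      ∀ j : ℝ, ∀ m : ℝ → ℝ, IsStationarySolution β lam ℓ j m →
        |m (r * ℓ) - Mprof β lam r| < ε := by
  intro r hr hr2 ε hε
  have hA : 0 < β * lam := mul_pos hβ hlam
  set A := β * lam with hA_def
  set δ := 1 - Real.tanh A ^ 2 with hδ_def
  have hδ : 0 < δ := by have := _root_.tanh_sq_lt_one A; rw [hδ_def]; linarith
  set B := A/δ + A with hB_def
  have hB : 0 < B := by positivity
  set L := max 5 (max (2/|r - 1/2|) (2*B/ε + 1)) with hL_def
  have hL5 : (5:ℝ) ≤ L := le_max_left _ _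
  refine ⟨L, by linarith, ?_⟩
  intro ℓ hℓL j m hsol
  have hℓ4 : 4 < ℓ := by linarith
  have hℓ0 : 0 < ℓ := by linarith
  obtain ⟨hj0, hjbound, hleft, hright⟩ := key β lam ℓ j m hβ hlam hℓ4 hsol
  have hεℓ : 2*B/ℓ < ε := by
    have h1 : 2*B/ε + 1 ≤ L := le_trans (le_max_right _ _) (le_max_right _ _)
    have h2 : 2*B/ε < ℓ := by linarith
    have h3 := (div_lt_iff₀ hε).1 h2
    rw [div_lt_iff₀ hℓ0]
    nlinarith
  have hjb : |j*ℓ - Real.tanh (A/2)| ≤ B/ℓ := hjbound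
  have hBl : 0 ≤ B/ℓ := by positivity
  rcases lt_or_gt_of_ne hr2 with hlt | hgt
  · -- r < 1/2 : left linear region
    have hrange : 2/|r - 1/2| ≤ L := le_trans (le_max_left _ _) (le_max_right _ _)
    have habs : |r - 1/2| = 1/2 - r := by rw [abs_of_neg (by linarith)]; ring
    have hq : 0 < 1/2 - r := by linarith
    have hcross : r * ℓ ≤ ℓ/2 - 1 := by
      rw [habs] at hrange
      have h5 : 2/(1/2 - r) < ℓ := by linarith
      have h6 := (div_lt_iff₀ hq).1 h5
      nlinarith
    have hm : m (r*ℓ) = -2*j*(r*ℓ) :=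
      hleft (r*ℓ) ⟨mul_nonneg hr.1 hℓ0.le, hcross⟩
    have hM : Mprof β lam r = -2*Real.tanh (A/2)*r := by
      simp only [Mprof, if_pos hlt, hA_def]
    rw [hm, hM]
    have he : -2*j*(r*ℓ) - -2*Real.tanh (A/2)*r = 2*r*(Real.tanh (A/2) - j*ℓ) := by ring
    rw [he, abs_mul, abs_sub_comm, abs_of_nonneg (by linarith [hr.1] : (0:ℝ) ≤ 2*r)]
    have h7 : 2*r*|j*ℓ - Real.tanh (A/2)| ≤ 2*(B/ℓ) := by
      nlinarith [abs_nonneg (j*ℓ - Real.tanh (A/2)), hr.1, hr.2]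
    have h8 : 2*(B/ℓ) = 2*B/ℓ := by ring
    linarith
  · -- r > 1/2 : right linear region
    have hrange : 2/|r - 1/2| ≤ L := le_trans (le_max_left _ _) (le_max_right _ _)
    have habs : |r - 1/2| = r - 1/2 := abs_of_pos (by linarith)
    have hq : 0 < r - 1/2 := by linarith
    have hcross : ℓ/2 + 1 ≤ r * ℓ := by
      rw [habs] at hrange
      have h5 : 2/(r - 1/2) < ℓ := by linarith
      have h6 := (div_lt_iff₀ hq).1 h5
      nlinarith
    have hm : m (r*ℓ) = 2*j*(ℓ - r*ℓ) :=
      hright (r*ℓ) ⟨hcross, by nlinarith [hr.2]⟩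
    have hM : Mprof β lam r = 2*Real.tanh (A/2)*(1-r) := by
      simp only [Mprof, if_neg (not_lt.2 (le_of_lt hgt)), hA_def]
    rw [hm, hM]
    have he : 2*j*(ℓ - r*ℓ) - 2*Real.tanh (A/2)*(1-r) = 2*(1-r)*(j*ℓ - Real.tanh (A/2)) := by
      ring
    rw [he, abs_mul, abs_of_nonneg (by linarith [hr.2] : (0:ℝ) ≤ 2*(1-r))]
    have h7 : 2*(1-r)*|j*ℓ - Real.tanh (A/2)| ≤ 2*(B/ℓ) := by
      nlinarith [abs_nonneg (j*ℓ - Real.tanh (A/2)), hr.1, hr.2]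
    have h8 : 2*(B/ℓ) = 2*B/ℓ := by ring
    linarith
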